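/- Let J ∈ [H]^𝒪 and L ⊆ G with J → L in 𝒪. Then for all g ∈ G, the transfer L ∩ gHg⁻¹ → L is in 𝒪, and the transfer J → L ∩ H_𝒪(J) is in 𝒪. -/

import Mathlib

/-- A transfer system on a group `G`: a partial order `rel` on subgroups refining the
subgroup relation, closed under conjugation and restriction. -/
structure TransferSystem (G : Type*) [Group G] where
  rel : Subgroup G → Subgroup G → Prop
  le_of_rel : ∀ {K H : Subgroup G}, rel K H → K ≤ H
  refl : ∀ H : Subgroup G, rel H H
  trans : ∀ {J K H : Subgroup G}, rel J K → rel K H → rel J H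
  antisymm : ∀ {K H : Subgroup G}, rel K H → rel H K → K = H
  conj : ∀ (g : G) {K H : Subgroup G}, rel K H →
    rel (K.map (MulAut.conj g).toMonoidHom) (H.map (MulAut.conj g).toMonoidHom)
  restrict : ∀ {K H L : Subgroup G}, rel K H → L ≤ H → rel (K ⊓ L) L

/-- Conjugate subgroup `gKg⁻¹`. -/
def conjSub {G : Type*} [Group G] (g : G) (K : Subgroup G) : Subgroup G :=
  K.map (MulAut.conj g).toMonoidHom

/-- `H_𝒪(J)`: the minimal subgroup containing `J` which transfers to `G` (the top subgroup). -/
noncomputable def HO {G : Type*} [Group G] (O : TransferSystem G) (J : Subgroup G) : Subgroup G :=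
  sInf {H : Subgroup G | O.rel H ⊤ ∧ J ≤ H}

/-- `J ∈ [H]^𝒪`: the inseparability class of `H`, i.e. `H_𝒪(J)` is conjugate to `H`. -/
def inClass {G : Type*} [Group G] (O : TransferSystem G) (H J : Subgroup G) : Prop :=
  ∃ g : G, conjSub g (HO O J) = H

/-- `J` and `K` are 𝒪-inseparable: `H_𝒪(J)` and `H_𝒪(K)` are conjugate. -/
def TSInseparable {G : Type*} [Group G] (O : TransferSystem G) (J K : Subgroup G) : Prop :=
  ∃ g : G, conjSub g (HO O J) = HO O K

/-- If `J` is in the class of `H` and `J → L` is in 𝒪, then for all `g` the transfer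
`L ⊓ gHg⁻¹ → L` is in 𝒪, and the transfer `J → L ⊓ H_𝒪(J)` is in 𝒪. -/
lemma conjSub_top {G : Type*} [Group G] (g : G) : conjSub g (⊤ : Subgroup G) = ⊤ := by
  ext x
  simp [conjSub, Subgroup.mem_map]

lemma conjSub_conjSub {G : Type*} [Group G] (a b : G) (K : Subgroup G) :
    conjSub a (conjSub b K) = conjSub (a * b) K := by
  ext x
  simp only [conjSub, Subgroup.mem_map, MulEquiv.coe_toMonoidHom, MulAut.conj_apply]
  constructor
  · rintro ⟨y, ⟨z, hz, rfl⟩, rfl⟩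
    exact ⟨z, hz, by group⟩
  · rintro ⟨z, hz, rfl⟩
    exact ⟨b * z * b⁻¹, ⟨z, hz, rfl⟩, by group⟩

lemma conjSub_one {G : Type*} [Group G] (K : Subgroup G) : conjSub 1 K = K := by
  ext x
  simp [conjSub, Subgroup.mem_map]

theorem transfers_up_to_L {G : Type*} [Group G] [Finite G] (O : TransferSystem G)
    {H J L : Subgroup G} (hH : O.rel H ⊤) (hJ : inClass O H J) (hJL : O.rel J L) :
    (∀ g : G, O.rel (L ⊓ conjSub g H) L) ∧ O.rel J (L ⊓ HO O J) := by
  have hHg : ∀ g : G, O.rel (conjSub g H) ⊤ := by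
    intro g
    have := O.conj g hH
    rw [show Subgroup.map (MulAut.conj g).toMonoidHom ⊤ = conjSub g ⊤ from rfl,
      conjSub_top] at this
    exact this
  have part1 : ∀ g : G, O.rel (L ⊓ conjSub g H) L := by
    intro g
    have := O.restrict (hHg g) (le_top : L ≤ ⊤)
    simpa [inf_comm] using this
  refine ⟨part1, ?_⟩
  -- rel (HO O J) ⊤
  obtain ⟨g, hg⟩ := hJ
  have hHO : HO O J = conjSub g⁻¹ H := by
    rw [← hg, conjSub_conjSub, inv_mul_cancel, conjSub_one]
  have hHOtop : O.rel (HO O J) ⊤ := hHO ▸ hHg g⁻¹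
  have hJle : J ≤ HO O J := le_sInf fun K hK => hK.2
  have hJleL : J ≤ L := O.le_of_rel hJL
  have h1 : (L ⊓ HO O J) ≤ L := inf_le_left
  have := O.restrict hJL h1
  have hJeq : J ⊓ (L ⊓ HO O J) = J := inf_eq_left.mpr (le_inf hJleL hJle)
  rwa [hJeq] at this
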